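/- Let Q ∈ ℝ^{m×m} be symmetric positive definite and let B ∈ ℝ^{m×n} have full column rank (rank B = n). Consider the real (n+m)×(n+m) block matrix J = [[0, −Bᵀ], [B, −Q]]. Then every complex eigenvalue λ of J satisfies Re(λ) < 0. More precisely: if Im(λ) = 0 then Re(λ) ≤ −λ_min(Q)·λ_min(BᵀB) / (λ_max(Q)·λ_min(Q) + λ_min(BᵀB)), and if Im(λ) ≠ 0 then Re(λ) ≤ −λ_min(Q)/2, where λ_min and λ_max denote the smallest and largest eigenvalues of the respective symmetric positive (semi)definite matrices. -/

import Mathlib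

open Matrix
open ComplexOrder Pointwise

section Helpers

lemma eig_vec {K : Type*} [Field K] {k : Type*} [Fintype k] [DecidableEq k]
    {M : Matrix k k K} {μ : K} (h : μ ∈ spectrum K M) :
    ∃ x : k → K, x ≠ 0 ∧ M *ᵥ x = μ • x := by
  rw [spectrum.mem_iff] at h
  have hd : ((algebraMap K (Matrix k k K)) μ - M).det = 0 := by
    by_contra hd
    exact h ((isUnit_iff_isUnit_det _).mpr (isUnit_iff_ne_zero.mpr hd))
  obtain ⟨x, hx0, hx⟩ := (Matrix.exists_mulVec_eq_zero_iff).mpr hd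
  refine ⟨x, hx0, ?_⟩
  rw [Algebra.algebraMap_eq_smul_one, sub_mulVec, smul_mulVec, one_mulVec,
    sub_eq_zero] at hx
  exact hx.symm

lemma dot_self_eq {k : Type*} [Fintype k] (z : k → ℂ) :
    star z ⬝ᵥ z = ((∑ i, Complex.normSq (z i) : ℝ) : ℂ) := by
  simp only [dotProduct, Pi.star_apply, Complex.ofReal_sum]
  refine Finset.sum_congr rfl fun i _ => ?_
  rw [mul_comm, ← Complex.mul_conj]
  rfl

lemma dot_self_nonneg {k : Type*} [Fintype k] (z : k → ℂ) :
    0 ≤ ∑ i, Complex.normSq (z i) :=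
  Finset.sum_nonneg fun i _ => Complex.normSq_nonneg _

lemma dot_self_pos {k : Type*} [Fintype k] {z : k → ℂ} (hz : z ≠ 0) :
    0 < ∑ i, Complex.normSq (z i) := by
  rcases (dot_self_nonneg z).lt_or_eq with h | h
  · exact h
  · exfalso
    apply hz
    funext i
    have := (Finset.sum_eq_zero_iff_of_nonneg
      (fun i _ => Complex.normSq_nonneg (z i))).mp h.symm i (Finset.mem_univ i)
    exact Complex.normSq_eq_zero.mp this

lemma map_conjTranspose_real {k l : Type*} (M : Matrix k l ℝ) :
    (Mᴴ).map (Complex.ofReal) = (M.map Complex.ofReal)ᴴ :=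
  Matrix.conjTranspose_map _ (fun x => by simp [Complex.conj_ofReal])

lemma map_mul_real {k l o : Type*} [Fintype l] (M : Matrix k l ℝ) (N : Matrix l o ℝ) :
    (M * N).map Complex.ofReal = M.map Complex.ofReal * N.map Complex.ofReal := by
  have := Matrix.map_mul (L := M) (M := N) (f := Complex.ofRealHom)
  exact this

lemma dot_self_nonneg' {k : Type*} [Fintype k] (z : k → ℂ) :
    0 ≤ star z ⬝ᵥ z := by
  rw [dot_self_eq]
  have : (0:ℝ) ≤ ∑ i, Complex.normSq (z i) := dot_self_nonneg z
  rw [Complex.le_def]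
  constructor
  · simpa using this
  · simp

lemma dot_conjTranspose {k l : Type*} [Fintype k] [Fintype l]
    (M : Matrix k l ℂ) (u : l → ℂ) (w : k → ℂ) :
    star u ⬝ᵥ (Mᴴ *ᵥ w) = star (M *ᵥ u) ⬝ᵥ w := by
  rw [star_mulVec, dotProduct_mulVec]

open scoped MatrixOrder in
lemma form_nonneg {k : Type*} [Fintype k] {M : Matrix k k ℝ} (hM : M.PosSemidef)
    (v : k → ℂ) : 0 ≤ star v ⬝ᵥ (M.map Complex.ofReal *ᵥ v) := by
  obtain ⟨C, hC⟩ : ∃ C : Matrix k k ℝ, M = Cᴴ * C := by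
    classical exact CStarAlgebra.nonneg_iff_eq_star_mul_self.mp hM.nonneg
  rw [hC, map_mul_real, map_conjTranspose_real, ← mulVec_mulVec, dot_conjTranspose]
  exact dot_self_nonneg' _

lemma herm_smul_one_sub {k : Type*} [Fintype k] [DecidableEq k] {M : Matrix k k ℝ}
    (hM : M.IsHermitian) (c : ℝ) : (c • (1 : Matrix k k ℝ) - M).IsHermitian := by
  unfold Matrix.IsHermitian
  rw [conjTranspose_sub, hM.eq, conjTranspose_smul, conjTranspose_one, star_trivial]

lemma psd_shift {k : Type*} [Fintype k] [DecidableEq k] {M : Matrix k k ℝ}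
    (hM : M.IsHermitian) {c : ℝ} (hc : ∀ μ ∈ spectrum ℝ M, c ≤ μ) :
    (M - c • 1).PosSemidef := by
  have hH : (M - c • (1 : Matrix k k ℝ)).IsHermitian := by
    have := herm_smul_one_sub hM c
    unfold Matrix.IsHermitian at this ⊢
    rw [conjTranspose_sub] at this ⊢
    rw [sub_eq_iff_eq_add] at this ⊢
    rw [conjTranspose_smul, conjTranspose_one, star_trivial, hM.eq]
    abel
  refine hH.posSemidef_iff_eigenvalues_nonneg.mpr fun i => show (0:ℝ) ≤ _ from ?_
  have hmem : hH.eigenvalues i ∈ spectrum ℝ (M - c • 1) := hH.eigenvalues_mem_spectrum_real i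
  have hmem2 : hH.eigenvalues i ∈ spectrum ℝ M - ({c} : Set ℝ) := by
    rw [spectrum.sub_singleton_eq, Algebra.algebraMap_eq_smul_one]; exact hmem
  obtain ⟨x, hx, y, hy, hxy⟩ := Set.mem_sub.mp hmem2
  rw [Set.mem_singleton_iff] at hy
  subst hy
  have := hc x hx
  rw [← hxy]
  linarith

open scoped MatrixOrder in
lemma psd_hsmul_sub_sq {k : Type*} [Fintype k] [DecidableEq k] {Q : Matrix k k ℝ}
    (hQ : Q.PosDef) {h : ℝ} (hh : ∀ μ ∈ spectrum ℝ Q, μ ≤ h) :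
    (h • Q - Q * Q).PosSemidef := by
  have hpsd := hQ.posSemidef
  set S := CFC.sqrt Q with hSdef
  have hS : S * S = Q := CFC.sqrt_mul_sqrt_self Q hpsd.nonneg
  have hSH : S.IsHermitian := (CFC.sqrt_nonneg Q).posSemidef.isHermitian
  have hN : (h • (1 : Matrix k k ℝ) - Q).PosSemidef := by
    have hH : (h • (1 : Matrix k k ℝ) - Q).IsHermitian := herm_smul_one_sub hQ.isHermitian h
    refine hH.posSemidef_iff_eigenvalues_nonneg.mpr fun i => show (0:ℝ) ≤ _ from ?_
    have hmem : hH.eigenvalues i ∈ spectrum ℝ (h • (1:Matrix k k ℝ) - Q) :=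
      hH.eigenvalues_mem_spectrum_real i
    have hmem2 : hH.eigenvalues i ∈ ({h} : Set ℝ) - spectrum ℝ Q := by
      rw [spectrum.singleton_sub_eq, Algebra.algebraMap_eq_smul_one]; exact hmem
    obtain ⟨x, hx, y, hy, hxy⟩ := Set.mem_sub.mp hmem2
    rw [Set.mem_singleton_iff] at hx
    subst hx
    have := hh y hy
    rw [← hxy]
    linarith
  have key : Sᴴ * (h • (1 : Matrix k k ℝ) - Q) * S = h • Q - Q * Q := by
    rw [hSH.eq, mul_sub, sub_mul, mul_smul_comm, mul_one, smul_mul_assoc, hS]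
    congr 1
    rw [← hS]
    noncomm_ring
  exact key ▸ hN.conjTranspose_mul_mul_same S

lemma mulVec_inj_of_rank {n m : ℕ} {B : Matrix (Fin m) (Fin n) ℝ} (hB : B.rank = n) :
    ∀ x : Fin n → ℝ, B *ᵥ x = 0 → x = 0 := by
  have hker : LinearMap.ker B.mulVecLin = ⊥ := by
    have h1 := LinearMap.finrank_range_add_finrank_ker B.mulVecLin
    rw [Matrix.rank] at hB
    have h2 : Module.finrank ℝ (Fin n → ℝ) = n := by simp
    rw [hB, h2] at h1
    have h3 : Module.finrank ℝ (LinearMap.ker B.mulVecLin) = 0 := by omega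
    exact Submodule.finrank_eq_zero.mp h3
  intro x hx
  have : x ∈ LinearMap.ker B.mulVecLin := by simpa [Matrix.mulVecLin_apply] using hx
  rwa [hker, Submodule.mem_bot] at this

lemma dot_self_pos_real {k : Type*} [Fintype k] {x : k → ℝ} (hx : x ≠ 0) :
    0 < x ⬝ᵥ x := by
  rcases lt_or_eq_of_le (Finset.sum_nonneg fun i _ => mul_self_nonneg (x i)) with h | h
  · exact h
  · exact absurd (dotProduct_self_eq_zero.mp h.symm) hx

lemma spectrum_pos_of_posDef {k : Type*} [Fintype k] [DecidableEq k]
    {M : Matrix k k ℝ} (hM : M.PosDef) {μ : ℝ} (h : μ ∈ spectrum ℝ M) : 0 < μ := by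
  obtain ⟨x, hx0, hx⟩ := eig_vec h
  have h1 : 0 < star x ⬝ᵥ (M *ᵥ x) := hM.dotProduct_mulVec_pos hx0
  rw [hx, star_trivial, dotProduct_smul, smul_eq_mul] at h1
  have h2 : 0 < x ⬝ᵥ x := dot_self_pos_real hx0
  nlinarith [h1, h2]

lemma bmin_pos_of_rank {n m : ℕ} {B : Matrix (Fin m) (Fin n) ℝ} (hB : B.rank = n)
    {μ : ℝ} (h : μ ∈ spectrum ℝ (Bᵀ * B)) : 0 < μ := by
  refine spectrum_pos_of_posDef ?_ h
  refine Matrix.PosDef.of_dotProduct_mulVec_pos ?_ ?_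
  · have := Matrix.isHermitian_conjTranspose_mul_self B
    simpa using this
  · intro x hx0
    rw [star_trivial, ← Matrix.mulVec_mulVec, Matrix.dotProduct_mulVec, Matrix.vecMul_transpose]
    have hBx : B *ᵥ x ≠ 0 := fun hc => hx0 (mulVec_inj_of_rank hB x hc)
    exact dot_self_pos_real hBx

lemma map_sub_smul_one {k : Type*} [Fintype k] [DecidableEq k] (X : Matrix k k ℝ) (c : ℝ) :
    (X - c • 1).map Complex.ofReal
      = X.map Complex.ofReal - (c : ℂ) • (1 : Matrix k k ℂ) := by
  ext a b
  by_cases hab : a = b <;>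
    simp [Matrix.map_apply, Matrix.sub_apply, Matrix.smul_apply, Matrix.one_apply, hab]

end Helpers

set_option maxHeartbeats 1000000 in
/-- Eigenvalue bounds for `J = [[0, −Bᵀ], [B, −Q]]` with `Q` symmetric positive definite
and `B` of full column rank: every complex eigenvalue `λ` of `J` has `Re λ < 0`; more
precisely, if `Im λ = 0` then
`Re λ ≤ −λ_min(Q)λ_min(BᵀB)/(λ_max(Q)λ_min(Q) + λ_min(BᵀB))`, and if `Im λ ≠ 0` then
`Re λ ≤ −λ_min(Q)/2`. -/
theorem gan_jacobian_eigenvalue_bounds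
    {n m : ℕ} (Q : Matrix (Fin m) (Fin m) ℝ) (B : Matrix (Fin m) (Fin n) ℝ)
    (hQsymm : Q.IsSymm) (hQpd : Q.PosDef) (hB : B.rank = n)
    (J : Matrix (Fin n ⊕ Fin m) (Fin n ⊕ Fin m) ℝ)
    (hJ : J = Matrix.fromBlocks 0 (-Bᵀ) B (-Q))
    (qmin qmax bmin : ℝ)
    (hqmin : IsLeast (spectrum ℝ Q) qmin)
    (hqmax : IsGreatest (spectrum ℝ Q) qmax)
    (hbmin : IsLeast (spectrum ℝ (Bᵀ * B)) bmin) :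
    ∀ lam ∈ spectrum ℂ (J.map Complex.ofReal),
      lam.re < 0 ∧
      (lam.im = 0 → lam.re ≤ -(qmin * bmin) / (qmax * qmin + bmin)) ∧
      (lam.im ≠ 0 → lam.re ≤ -(qmin / 2)) := by
  intro lam hlam
  -- basic positivity facts
  have hqminpos : 0 < qmin := spectrum_pos_of_posDef hQpd hqmin.1
  have hbminpos : 0 < bmin := bmin_pos_of_rank hB hbmin.1
  have hqmaxge : qmin ≤ qmax := hqmax.2 hqmin.1
  -- eigenvector
  obtain ⟨x, hx0, hx⟩ := eig_vec hlam
  set Bc : Matrix (Fin m) (Fin n) ℂ := B.map Complex.ofReal with hBc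
  set Qc : Matrix (Fin m) (Fin m) ℂ := Q.map Complex.ofReal with hQc
  have hBH : Bᵀ.map Complex.ofReal = Bcᴴ := by
    ext i j
    simp [hBc, Matrix.map_apply, Matrix.conjTranspose_apply, Matrix.transpose_apply,
      Complex.conj_ofReal]
  have hQH : Qcᴴ = Qc := by
    ext i j
    have hsym : Q j i = Q i j := congrFun (congrFun hQsymm i) j
    simp [hQc, Matrix.map_apply, Matrix.conjTranspose_apply, Complex.conj_ofReal, hsym]
  set u : Fin n → ℂ := fun i => x (Sum.inl i) with hu
  set v : Fin m → ℂ := fun i => x (Sum.inr i) with hv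
  -- block equations
  have h0 : ((0 : Matrix (Fin n) (Fin n) ℝ).map Complex.ofReal) = 0 := by
    ext a b; simp
  have hnegB : ((-Bᵀ).map Complex.ofReal) = -Bcᴴ := by
    rw [← hBH]; ext a b; simp
  have hnegQ : ((-Q).map Complex.ofReal) = -Qc := by
    rw [hQc]; ext a b; simp
  rw [hJ, fromBlocks_map, fromBlocks_mulVec, h0, hnegB, hnegQ,
    show x ∘ Sum.inl = u from rfl, show x ∘ Sum.inr = v from rfl] at hx
  have hE1 : Bcᴴ *ᵥ v = -(lam • u) := by
    funext i
    have h := congrFun hx (Sum.inl i)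
    simp only [Sum.elim_inl, Matrix.zero_mulVec, Matrix.neg_mulVec, Pi.add_apply,
      Pi.neg_apply, zero_add, Pi.smul_apply, smul_eq_mul] at h
    have hxu : x (Sum.inl i) = u i := rfl
    rw [hxu] at h
    simp only [Pi.neg_apply, Pi.smul_apply, smul_eq_mul]
    linear_combination -h
  have hE2 : Bc *ᵥ u = lam • v + Qc *ᵥ v := by
    funext i
    have h := congrFun hx (Sum.inr i)
    simp only [Sum.elim_inr, Matrix.neg_mulVec, Pi.add_apply,
      Pi.neg_apply, Pi.smul_apply, smul_eq_mul] at h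
    have hxv : x (Sum.inr i) = v i := rfl
    rw [hxv] at h
    simp only [Pi.add_apply, Pi.smul_apply, smul_eq_mul]
    linear_combination h
  -- scalar quantities
  set P : ℝ := ∑ i, Complex.normSq (u i) with hPdef
  set Qn : ℝ := ∑ i, Complex.normSq (v i) with hQndef
  have hp : star u ⬝ᵥ u = (P : ℂ) := dot_self_eq u
  have hq : star v ⬝ᵥ v = (Qn : ℂ) := dot_self_eq v
  set r : ℂ := star v ⬝ᵥ (Qc *ᵥ v) with hrdef
  set s : ℂ := star (Bc *ᵥ u) ⬝ᵥ (Bc *ᵥ u) with hsdef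
  set w : ℂ := star (Qc *ᵥ v) ⬝ᵥ (Qc *ᵥ v) with hwdef
  set S : ℝ := ∑ i, Complex.normSq ((Bc *ᵥ u) i) with hSdef
  set W : ℝ := ∑ i, Complex.normSq ((Qc *ᵥ v) i) with hWdef
  have hs : s = (S : ℂ) := dot_self_eq _
  have hw : w = (W : ℂ) := dot_self_eq _
  clear_value P Qn r s w S W
  have hr' : star (Qc *ᵥ v) ⬝ᵥ v = r := by
    rw [hrdef]
    conv_rhs => rw [← hQH, dot_conjTranspose]
  -- PSD inequality 1 : qmin * Qn ≤ R and r is real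
  have hpsd1 := form_nonneg (psd_shift hQpd.1 (fun μ h => hqmin.2 h)) v
  rw [map_sub_smul_one, ← hQc, sub_mulVec, smul_mulVec, one_mulVec, dotProduct_sub,
    dotProduct_smul, hq, ← hrdef, smul_eq_mul, Complex.le_def] at hpsd1
  obtain ⟨hg1, hg1im⟩ := hpsd1
  simp only [Complex.zero_re, Complex.zero_im, Complex.sub_re, Complex.sub_im, Complex.mul_re,
    Complex.mul_im, Complex.ofReal_re, Complex.ofReal_im] at hg1 hg1im
  set R : ℝ := r.re with hRdef
  have hrim : r.im = 0 := by linarith [hg1im]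
  have hrR : r = (R : ℂ) := by
    apply Complex.ext
    · simp [hRdef]
    · simp [hrim]
  have hg1' : qmin * Qn ≤ R := by linarith [hg1]
  clear_value R
  -- PSD inequality 4 : bmin * P ≤ S
  have hBtB : (Bᵀ * B).IsHermitian := by
    have := Matrix.isHermitian_conjTranspose_mul_self B
    simpa using this
  have hpsd4 := form_nonneg (psd_shift hBtB (fun μ h => hbmin.2 h)) u
  rw [map_sub_smul_one, map_mul_real, hBH, ← hBc, sub_mulVec, smul_mulVec, one_mulVec,
    dotProduct_sub, dotProduct_smul, hp, ← mulVec_mulVec, dot_conjTranspose, ← hsdef, hs,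
    smul_eq_mul, Complex.le_def] at hpsd4
  obtain ⟨hg4, -⟩ := hpsd4
  simp only [Complex.zero_re, Complex.sub_re, Complex.mul_re, Complex.ofReal_re,
    Complex.ofReal_im] at hg4
  have hg4' : bmin * P ≤ S := by linarith [hg4]
  -- PSD inequality 3 : W ≤ qmax * R
  have hpsd3 := form_nonneg (psd_hsmul_sub_sq hQpd (fun μ h => hqmax.2 h)) v
  have hmap3 : (qmax • Q - Q * Q).map Complex.ofReal = (qmax : ℂ) • Qc - Qc * Qc := by
    rw [hQc, ← map_mul_real]
    ext a b
    simp [Matrix.map_apply, Matrix.sub_apply, Matrix.smul_apply]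
  rw [hmap3, sub_mulVec, smul_mulVec, dotProduct_sub, dotProduct_smul, ← hrdef,
    ← mulVec_mulVec] at hpsd3
  have hQcc : star v ⬝ᵥ (Qc *ᵥ (Qc *ᵥ v)) = w := by
    have h := dot_conjTranspose Qc v (Qc *ᵥ v)
    rw [hQH] at h
    rw [h, hwdef]
  rw [hQcc, hrR, hw, smul_eq_mul, Complex.le_def] at hpsd3
  obtain ⟨hg3, -⟩ := hpsd3
  simp only [Complex.zero_re, Complex.sub_re, Complex.mul_re, Complex.ofReal_re,
    Complex.ofReal_im] at hg3
  have hg3' : W ≤ qmax * R := by linarith [hg3]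
  -- main scalar equation
  have e0 : star (Bc *ᵥ u) ⬝ᵥ v = -(lam * (P : ℂ)) := by
    rw [← dot_conjTranspose, hE1]
    simp only [dotProduct_neg, dotProduct_smul, smul_eq_mul, hp]
  have eqI : star lam * (Qn : ℂ) + (R : ℂ) + lam * (P : ℂ) = 0 := by
    rw [← hrR]
    have h2 := e0
    rw [hE2, star_add, add_dotProduct, star_smul, smul_dotProduct, hq, hr'] at h2
    simp only [smul_eq_mul, star_trivial] at h2
    linear_combination h2
  have e1 : lam.re * Qn + R + lam.re * P = 0 := by
    have h := congrArg Complex.re eqI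
    simpa [Complex.add_re, Complex.mul_re, Complex.ofReal_re, Complex.ofReal_im] using h
  have e2 : -(lam.im * Qn) + lam.im * P = 0 := by
    have h := congrArg Complex.im eqI
    simpa [Complex.add_im, Complex.mul_im, Complex.ofReal_re, Complex.ofReal_im] using h
  -- s expansion
  have es : s = star lam * lam * (Qn : ℂ) + star lam * (R : ℂ) + lam * (R : ℂ) + (W : ℂ) := by
    have t1 : star (lam • v) ⬝ᵥ (lam • v) = star lam * lam * (Qn : ℂ) := by
      rw [star_smul, smul_dotProduct, dotProduct_smul, hq]
      simp only [smul_eq_mul, star_trivial]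
      ring
    have t2 : star (lam • v) ⬝ᵥ (Qc *ᵥ v) = star lam * r := by
      rw [star_smul, smul_dotProduct, ← hrdef]
      simp only [smul_eq_mul, star_trivial]
    have t3 : star (Qc *ᵥ v) ⬝ᵥ (lam • v) = lam * r := by
      rw [dotProduct_smul, hr', smul_eq_mul]
    have t4 : star (Qc *ᵥ v) ⬝ᵥ (Qc *ᵥ v) = w := hwdef.symm
    rw [hsdef]
    conv_lhs => rw [hE2]
    rw [star_add, add_dotProduct, dotProduct_add, dotProduct_add, t1, t2, t3, t4, hrR, hw]
    ring
  -- nonvanishing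
  have hPnn : 0 ≤ P := by rw [hPdef]; exact dot_self_nonneg u
  have hQnn : 0 ≤ Qn := by rw [hQndef]; exact dot_self_nonneg v
  have hvne : v ≠ 0 := by
    intro hv0
    have hBu : Bc *ᵥ u = 0 := by
      rw [hE2, hv0]
      simp only [smul_zero, Matrix.mulVec_zero, add_zero]
    have hS0 : S = 0 := by
      rw [hSdef, hBu]
      simp only [Pi.zero_apply, map_zero, Finset.sum_const_zero]
    have hP0 : P = 0 := by
      by_contra hP
      have hPpos : 0 < P := lt_of_le_of_ne hPnn (Ne.symm hP)
      have : 0 < bmin * P := mul_pos hbminpos hPpos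
      linarith [hg4', hS0.ge, hS0.le]
    have hu0 : u = 0 := by
      by_contra hu0
      have : 0 < P := by rw [hPdef]; exact dot_self_pos hu0
      linarith
    apply hx0
    funext i
    cases i with
    | inl i => exact congrFun hu0 i
    | inr i => exact congrFun hv0 i
  have hQnpos : 0 < Qn := by rw [hQndef]; exact dot_self_pos hvne
  have hPQ : 0 < P + Qn := by linarith
  have hRpos : 0 < R := lt_of_lt_of_le (mul_pos hqminpos hQnpos) hg1'
  have ha : lam.re < 0 := by
    by_contra hcon
    push_neg at hcon
    have : 0 ≤ lam.re * (P + Qn) := mul_nonneg hcon hPQ.le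
    nlinarith [e1, hRpos]
  refine ⟨ha, ?_, ?_⟩
  · -- real eigenvalue case
    intro him
    have hRe : R = -lam.re * (P + Qn) := by linarith [e1]
    have eS : S = lam.re ^ 2 * Qn + 2 * lam.re * R + W := by
      have h := es
      rw [hs] at h
      have hlam' : lam = ((lam.re : ℝ) : ℂ) := by
        apply Complex.ext
        · simp
        · simp [him]
      rw [hlam'] at h
      have h2 : (S : ℂ) = ((lam.re ^ 2 * Qn + 2 * lam.re * R + W : ℝ) : ℂ) := by
        rw [h]
        simp only [Complex.star_def, Complex.conj_ofReal]
        push_cast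
        ring
      exact_mod_cast h2
    have haR : lam.re * R = -(lam.re ^ 2) * (P + Qn) := by rw [hRe]; ring
    have ha2 : 0 ≤ lam.re ^ 2 * (2 * P + Qn) :=
      mul_nonneg (sq_nonneg lam.re) (by linarith)
    have hii : bmin * P ≤ qmax * R := by
      linarith [hg4', hg3', eS, haR, ha2]
    have hfin : qmin * bmin ≤ -lam.re * (qmax * qmin + bmin) := by
      have h1' : bmin * (qmin * Qn) ≤ bmin * R :=
        mul_le_mul_of_nonneg_left hg1' hbminpos.le
      have h2' : qmin * (bmin * P) ≤ qmin * (qmax * R) :=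
        mul_le_mul_of_nonneg_left hii hqminpos.le
      have hbR : bmin * R = bmin * (-lam.re * (P + Qn)) := by rw [← hRe]
      have hqR : qmin * (qmax * R) = qmin * (qmax * (-lam.re * (P + Qn))) := by rw [← hRe]
      have hcomb : (qmin * bmin) * (P + Qn) ≤ (-lam.re * (qmax * qmin + bmin)) * (P + Qn) := by
        linarith [h1', h2', hbR, hqR]
      exact le_of_mul_le_mul_right hcomb hPQ
    have hD : 0 < qmax * qmin + bmin := by
      linarith [mul_pos (lt_of_lt_of_le hqminpos hqmaxge) hqminpos]
    rw [neg_div, le_neg, div_le_iff₀ hD]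
    linarith [hfin]
  · -- complex eigenvalue case
    intro him
    have hPQn : P = Qn := by
      rcases mul_eq_zero.mp (show lam.im * (P - Qn) = 0 by linarith [e2]) with h | h
      · exact absurd h him
      · linarith
    by_contra hcon
    push_neg at hcon
    have hpos : 0 < (2 * lam.re + qmin) * Qn := mul_pos (by linarith) hQnpos
    have haP : lam.re * P = lam.re * Qn := by rw [hPQn]
    linarith [e1, hg1', hpos, haP]
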